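/- Let R and S be consistent bags over finite attribute sets X and Y, and let W be a minimal witness to their consistency, i.e., there is no bag U witnessing the consistency of R and S whose support is a proper subset of the support of W. Then |Supp(W)| ≤ |Supp(R)| + |Supp(S)|. -/

import Mathlib

variable {A : Type} [DecidableEq A]

/-- The type of `X`-tuples: functions assigning to each attribute `a ∈ X` an element
of its domain `D a`. -/
def Tup (D : A → Type) (X : Finset A) : Type := ∀ a : X, D a.1

/-- Restriction (projection) of an `X`-tuple to `Z ⊆ X`. -/
def Tup.restrict {D : A → Type} {X Z : Finset A} (h : Z ⊆ X) (t : Tup D X) : Tup D Z :=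
  fun a => t ⟨a.1, h a.2⟩

/-- A bag over `X`: a finitely supported function from `X`-tuples to ℕ. -/
abbrev Bag (D : A → Type) (X : Finset A) : Type := Tup D X →₀ ℕ

/-- The marginal of a bag on `Z ⊆ X`. -/
noncomputable def Bag.marginal {D : A → Type} {X Z : Finset A} (h : Z ⊆ X) (R : Bag D X) :
    Bag D Z := Finsupp.mapDomain (Tup.restrict h) R

/-- Two bags are consistent if a common bag over the union of schemas has them as marginals. -/
def Consistent {D : A → Type} {X Y : Finset A} (R : Bag D X) (S : Bag D Y) : Prop :=
  ∃ T : Bag D (X ∪ Y),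
    Bag.marginal Finset.subset_union_left T = R ∧
    Bag.marginal Finset.subset_union_right T = S


section AuxGeneric

variable {α β γ : Type}

lemma sum_cycle_reindex {M : Type} [AddCommMonoid M] (n : ℕ) (f : ℕ → M) :
    ∑ k ∈ Finset.range n, f ((k + 1) % n) = ∑ k ∈ Finset.range n, f k := by
  cases n with
  | zero => simp
  | succ m =>
    rw [Finset.sum_range_succ, Nat.mod_self, Finset.sum_range_succ' f m]
    congr 1
    apply Finset.sum_congr rfl
    intro k hk
    rw [Nat.mod_eq_of_lt (by simp at hk; omega)]

lemma mapDomain_finset_sum (p : α → β) {ι : Type} (s : Finset ι) (g : ι → (α →₀ ℕ)) :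
    Finsupp.mapDomain p (∑ i ∈ s, g i) = ∑ i ∈ s, Finsupp.mapDomain p (g i) := by
  classical
  induction s using Finset.induction with
  | empty => simp
  | insert a s h ih => rw [Finset.sum_insert h, Finset.sum_insert h, Finsupp.mapDomain_add, ih]

lemma cycleReduce (W : α →₀ ℕ) (p : α → β) (q : α → γ)
    (n : ℕ) (hn : 0 < n) (a b : ℕ → α)
    (ha : ∀ k < n, a k ∈ W.support) (hb : ∀ k < n, b k ∈ W.support)
    (hp : ∀ k < n, p (a k) = p (b k))
    (hq : ∀ k < n, q (b k) = q (a ((k + 1) % n)))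
    (hba : ∀ k < n, ∀ l < n, b k ≠ a l)
    (hbinj : ∀ k < n, ∀ l < n, b k = b l → k = l) :
    ∃ U : α →₀ ℕ, Finsupp.mapDomain p U = Finsupp.mapDomain p W ∧
      Finsupp.mapDomain q U = Finsupp.mapDomain q W ∧ U.support ⊂ W.support := by
  classical
  obtain ⟨k0, hk0m, hk0min⟩ :=
    Finset.exists_min_image (Finset.range n) (fun k => W (b k)) ⟨0, Finset.mem_range.2 hn⟩
  rw [Finset.mem_range] at hk0m
  set m := W (b k0) with hmdef
  have hmpos : 0 < m := Nat.pos_of_ne_zero (Finsupp.mem_support_iff.1 (hb k0 hk0m))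
  set P : α →₀ ℕ := ∑ k ∈ Finset.range n, Finsupp.single (a k) m with hPdef
  set Q : α →₀ ℕ := ∑ k ∈ Finset.range n, Finsupp.single (b k) m with hQdef
  have hQapp : ∀ t, Q t = if ∃ k, k < n ∧ b k = t then m else 0 := by
    intro t
    rw [hQdef, Finsupp.finset_sum_apply]
    by_cases h : ∃ k, k < n ∧ b k = t
    · obtain ⟨k, hkn, hbk⟩ := h
      rw [if_pos ⟨k, hkn, hbk⟩, Finset.sum_eq_single_of_mem k (Finset.mem_range.2 hkn)]
      · rw [hbk, Finsupp.single_apply, if_pos rfl]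
      · intro l hl hlk
        rw [Finsupp.single_apply, if_neg]
        intro hbl
        exact hlk (hbinj l (Finset.mem_range.1 hl) k hkn (by rw [hbl, hbk]))
    · rw [if_neg h]
      apply Finset.sum_eq_zero
      intro l hl
      rw [Finsupp.single_apply, if_neg]
      intro hbl
      exact h ⟨l, Finset.mem_range.1 hl, hbl⟩
  have hPapp0 : ∀ t, (∀ k, k < n → a k ≠ t) → P t = 0 := by
    intro t ht
    rw [hPdef, Finsupp.finset_sum_apply]
    apply Finset.sum_eq_zero
    intro l hl
    rw [Finsupp.single_apply, if_neg (ht l (Finset.mem_range.1 hl))]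
  have hQle : Q ≤ W := by
    rw [Finsupp.le_def]
    intro t
    rw [hQapp]
    split_ifs with h
    · obtain ⟨k, hkn, hbk⟩ := h
      rw [← hbk]
      exact hk0min k (Finset.mem_range.2 hkn)
    · exact Nat.zero_le _
  set U : α →₀ ℕ := (W - Q) + P with hUdef
  have hUQ : U + Q = W + P := by
    have h1 : W - Q + Q = W := tsub_add_cancel_of_le hQle
    rw [hUdef, add_right_comm, h1]
  have hmPQ : Finsupp.mapDomain p P = Finsupp.mapDomain p Q := by
    rw [hPdef, hQdef, mapDomain_finset_sum, mapDomain_finset_sum]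
    apply Finset.sum_congr rfl
    intro k hk
    rw [Finsupp.mapDomain_single, Finsupp.mapDomain_single, hp k (Finset.mem_range.1 hk)]
  have hmQP : Finsupp.mapDomain q Q = Finsupp.mapDomain q P := by
    rw [hPdef, hQdef, mapDomain_finset_sum, mapDomain_finset_sum]
    calc ∑ k ∈ Finset.range n, Finsupp.mapDomain q (Finsupp.single (b k) m)
        = ∑ k ∈ Finset.range n, Finsupp.single (q (a ((k + 1) % n))) m := by
          apply Finset.sum_congr rfl
          intro k hk
          rw [Finsupp.mapDomain_single, hq k (Finset.mem_range.1 hk)]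
      _ = ∑ k ∈ Finset.range n, Finsupp.single (q (a k)) m :=
          sum_cycle_reindex n (fun k => Finsupp.single (q (a k)) m)
      _ = ∑ k ∈ Finset.range n, Finsupp.mapDomain q (Finsupp.single (a k) m) := by
          apply Finset.sum_congr rfl
          intro k hk
          rw [Finsupp.mapDomain_single]
  refine ⟨U, ?_, ?_, ?_⟩
  · have h2 : Finsupp.mapDomain p U + Finsupp.mapDomain p Q
        = Finsupp.mapDomain p W + Finsupp.mapDomain p Q := by
      rw [← Finsupp.mapDomain_add, hUQ, Finsupp.mapDomain_add, hmPQ]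
    exact add_right_cancel h2
  · have h2 : Finsupp.mapDomain q U + Finsupp.mapDomain q Q
        = Finsupp.mapDomain q W + Finsupp.mapDomain q Q := by
      rw [← Finsupp.mapDomain_add, hUQ, Finsupp.mapDomain_add, hmQP]
    exact add_right_cancel h2
  · have hsub : U.support ⊆ W.support := by
      intro t ht
      rw [Finsupp.mem_support_iff] at ht
      by_contra hWt
      rw [Finsupp.notMem_support_iff] at hWt
      have hQt : Q t = 0 := Nat.le_zero.1 (hWt ▸ Finsupp.le_def.1 hQle t)
      have hPt : P t = 0 := by
        apply hPapp0
        intro k hk hak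
        exact (Finsupp.mem_support_iff.1 (ha k hk)) (hak ▸ hWt)
      apply ht
      rw [hUdef, Finsupp.add_apply, Finsupp.tsub_apply, hWt, hQt, hPt]
      rfl
    have hUb0 : U (b k0) = 0 := by
      have hQb : Q (b k0) = m := by rw [hQapp, if_pos ⟨k0, hk0m, rfl⟩]
      have hPb : P (b k0) = 0 := by
        apply hPapp0
        intro k hk hak
        exact hba k0 hk0m k hk hak.symm
      rw [hUdef, Finsupp.add_apply, Finsupp.tsub_apply, hQb, hPb, ← hmdef, Nat.sub_self]
    rw [Finset.ssubset_def]
    refine ⟨hsub, fun hcon => ?_⟩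
    have := hcon (hb k0 hk0m)
    rw [Finsupp.mem_support_iff] at this
    exact this hUb0

lemma cycleFromWalk (W : α →₀ ℕ) (p : α → β) (q : α → γ) (w : ℕ → α) (i n : ℕ) (hn : 0 < n)
    (hmem : ∀ k, w k ∈ W.support)
    (hsp : ∀ k < n, p (w (i + 2 * k + 1)) = p (w (i + 2 * k)))
    (hsq : ∀ k, k + 1 < n → q (w (i + 2 * k + 2)) = q (w (i + 2 * k + 1)))
    (hclose : q (w (i + 2 * n - 1)) = q (w i))
    (hdist : ∀ s t, i ≤ s → s < t → t < i + 2 * n → w s ≠ w t) :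
    ∃ U : α →₀ ℕ, Finsupp.mapDomain p U = Finsupp.mapDomain p W ∧
      Finsupp.mapDomain q U = Finsupp.mapDomain q W ∧ U.support ⊂ W.support := by
  apply cycleReduce W p q n hn (fun k => w (i + 2 * k)) (fun k => w (i + 2 * k + 1))
  · intro k _; exact hmem _
  · intro k _; exact hmem _
  · intro k hk; exact (hsp k hk).symm
  · intro k hk
    by_cases h : k + 1 < n
    · rw [Nat.mod_eq_of_lt h]
      have harith : i + 2 * (k + 1) = i + 2 * k + 2 := by ring
      rw [harith]
      exact (hsq k h).symm
    · have hk1 : (k + 1) % n = 0 := by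
        have : k + 1 = n := by omega
        rw [this, Nat.mod_self]
      rw [hk1]
      have harith : i + 2 * k + 1 = i + 2 * n - 1 := by omega
      have harith2 : i + 2 * 0 = i := by ring
      rw [harith, harith2, hclose]
  · intro k hk l hl heq
    rcases lt_trichotomy (i + 2 * k + 1) (i + 2 * l) with h | h | h
    · exact hdist _ _ (by omega) h (by omega) heq
    · omega
    · exact hdist _ _ (by omega) h (by omega) heq.symm
  · intro k hk l hl heq
    by_contra hne
    rcases lt_trichotomy (i + 2 * k + 1) (i + 2 * l + 1) with h | h | h
    · exact hdist _ _ (by omega) h (by omega) heq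
    · omega
    · exact hdist _ _ (by omega) h (by omega) heq.symm


lemma existsCycleReduce (W : α →₀ ℕ) (hne : W.support.Nonempty)
    (p : α → β) (q : α → γ)
    (hdp : ∀ e ∈ W.support, ∃ f ∈ W.support, f ≠ e ∧ p f = p e)
    (hdq : ∀ e ∈ W.support, ∃ f ∈ W.support, f ≠ e ∧ q f = q e) :
    ∃ U : α →₀ ℕ, Finsupp.mapDomain p U = Finsupp.mapDomain p W ∧
      Finsupp.mapDomain q U = Finsupp.mapDomain q W ∧ U.support ⊂ W.support := by
  classical
  obtain ⟨e0, he0⟩ := hne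
  set np : α → α := fun e =>
    if h : ∃ f ∈ W.support, f ≠ e ∧ p f = p e then h.choose else e with hnpdef
  set nq : α → α := fun e =>
    if h : ∃ f ∈ W.support, f ≠ e ∧ q f = q e then h.choose else e with hnqdef
  have hnp : ∀ e ∈ W.support, np e ∈ W.support ∧ np e ≠ e ∧ p (np e) = p e := by
    intro e he
    have h := hdp e he
    rw [hnpdef]
    simp only [dif_pos h]
    exact ⟨h.choose_spec.1, h.choose_spec.2.1, h.choose_spec.2.2⟩
  have hnq : ∀ e ∈ W.support, nq e ∈ W.support ∧ nq e ≠ e ∧ q (nq e) = q e := by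
    intro e he
    have h := hdq e he
    rw [hnqdef]
    simp only [dif_pos h]
    exact ⟨h.choose_spec.1, h.choose_spec.2.1, h.choose_spec.2.2⟩
  set w : ℕ → α := fun k =>
    Nat.rec e0 (fun k ih => if k % 2 = 0 then np ih else nq ih) k with hwdef
  have hwsucc : ∀ k, w (k + 1) = if k % 2 = 0 then np (w k) else nq (w k) := fun k => rfl
  have hmem : ∀ k, w k ∈ W.support := by
    intro k
    induction k with
    | zero => exact he0
    | succ k ih =>
      rw [hwsucc]
      split_ifs
      · exact (hnp _ ih).1
      · exact (hnq _ ih).1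
  have hstepp : ∀ k, k % 2 = 0 → p (w (k + 1)) = p (w k) ∧ w (k + 1) ≠ w k := by
    intro k hk
    rw [hwsucc, if_pos hk]
    exact ⟨(hnp _ (hmem k)).2.2, (hnp _ (hmem k)).2.1⟩
  have hstepq : ∀ k, k % 2 = 1 → q (w (k + 1)) = q (w k) ∧ w (k + 1) ≠ w k := by
    intro k hk
    rw [hwsucc, if_neg (by omega)]
    exact ⟨(hnq _ (hmem k)).2.2, (hnq _ (hmem k)).2.1⟩
  have hne' : ∀ k, w (k + 1) ≠ w k := by
    intro k
    rcases Nat.mod_two_eq_zero_or_one k with h | h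
    · exact (hstepp k h).2
    · exact (hstepq k h).2
  have hPex : ∃ jj, ∃ ii, ii < jj ∧ w ii = w jj := by
    obtain ⟨s, t, hst, he⟩ := Finite.exists_ne_map_eq_of_infinite
      (fun k : ℕ => (⟨w k, hmem k⟩ : {x // x ∈ W.support}))
    have he' : w s = w t := Subtype.ext_iff.1 he
    rcases lt_or_gt_of_ne hst with h | h
    · exact ⟨t, s, h, he'⟩
    · exact ⟨s, t, h, he'.symm⟩
  set j := Nat.find hPex with hjdef
  obtain ⟨i, hij, hwij⟩ := Nat.find_spec hPex
  rw [← hjdef] at hij hwij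
  have hdist : ∀ s t, s < t → t < j → w s ≠ w t := by
    intro s t hst htj heq
    exact Nat.find_min hPex htj ⟨s, hst, heq⟩
  have hd2 : i + 2 ≤ j := by
    rcases Nat.lt_or_ge (i + 1) j with h | h
    · omega
    · have : j = i + 1 := by omega
      rw [this] at hwij
      exact absurd hwij.symm (hne' i)
  rcases Nat.even_or_odd (j - i) with hpar | hpar
  · -- even gap: cycle w i, ..., w (j-1)
    obtain ⟨c, hc⟩ := hpar
    set n := (j - i) / 2 with hndef
    have hn : 0 < n := by omega
    have h2n : i + 2 * n = j := by omega
    have hdist' : ∀ s t, i ≤ s → s < t → t < i + 2 * n → w s ≠ w t := by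
      intro s t _ hst htn
      exact hdist s t hst (by omega)
    rcases Nat.mod_two_eq_zero_or_one i with hi | hi
    · -- i even: p-shares at even positions
      apply cycleFromWalk W p q w i n hn hmem
      · intro k hk
        exact (hstepp (i + 2 * k) (by omega)).1
      · intro k hk
        exact (hstepq (i + 2 * k + 1) (by omega)).1
      · have hq1 := (hstepq (j - 1) (by omega)).1
        have hj1 : j - 1 + 1 = j := by omega
        rw [hj1] at hq1
        have : i + 2 * n - 1 = j - 1 := by omega
        rw [this, ← hq1, ← hwij]
      · exact hdist'
    · -- i odd: q-shares at even positions; swap roles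
      obtain ⟨U, h1, h2, h3⟩ := cycleFromWalk W q p w i n hn hmem
        (fun k hk => (hstepq (i + 2 * k) (by omega)).1)
        (fun k hk => (hstepp (i + 2 * k + 1) (by omega)).1)
        (by
          have hq1 := (hstepp (j - 1) (by omega)).1
          have hj1 : j - 1 + 1 = j := by omega
          rw [hj1] at hq1
          have : i + 2 * n - 1 = j - 1 := by omega
          rw [this, ← hq1, ← hwij])
        hdist'
      exact ⟨U, h2, h1, h3⟩
  · -- odd gap: drop w i, cycle w (i+1), ..., w (j-1)
    obtain ⟨c, hc⟩ := hpar
    have hd3 : i + 3 ≤ j := by omega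
    set n := (j - i - 1) / 2 with hndef
    have hn : 0 < n := by omega
    have h2n : i + 1 + 2 * n = j := by omega
    have hdist' : ∀ s t, i + 1 ≤ s → s < t → t < i + 1 + 2 * n → w s ≠ w t := by
      intro s t _ hst htn
      exact hdist s t hst (by omega)
    rcases Nat.mod_two_eq_zero_or_one i with hi | hi
    · -- i even, so i+1 odd: q-shares at positions i+1+2k; swap roles
      obtain ⟨U, h1, h2, h3⟩ := cycleFromWalk W q p w (i + 1) n hn hmem
        (fun k hk => (hstepq (i + 1 + 2 * k) (by omega)).1)
        (fun k hk => (hstepp (i + 1 + 2 * k + 1) (by omega)).1)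
        (by
          -- goal: p (w (i+1+2n-1)) = p (w (i+1))
          have hA := (hstepp (j - 1) (by omega)).1
          have hj1 : j - 1 + 1 = j := by omega
          rw [hj1] at hA
          have hB := (hstepp i hi).1
          have : i + 1 + 2 * n - 1 = j - 1 := by omega
          rw [this, ← hA, ← hwij, ← hB])
        hdist'
      exact ⟨U, h2, h1, h3⟩
    · -- i odd, so i+1 even: p-shares at positions i+1+2k
      apply cycleFromWalk W p q w (i + 1) n hn hmem
      · intro k hk
        exact (hstepp (i + 1 + 2 * k) (by omega)).1
      · intro k hk
        exact (hstepq (i + 1 + 2 * k + 1) (by omega)).1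
      · have hA := (hstepq (j - 1) (by omega)).1
        have hj1 : j - 1 + 1 = j := by omega
        rw [hj1] at hA
        have hB := (hstepq i hi).1
        have : i + 1 + 2 * n - 1 = j - 1 := by omega
        rw [this, ← hA, ← hwij, ← hB]
      · exact hdist'


lemma combineStep (W : α →₀ ℕ) (p : α → β) (q : α → γ) (e : α) (he : e ∈ W.support)
    (U₁ : α →₀ ℕ)
    (h1 : Finsupp.mapDomain p U₁ = Finsupp.mapDomain p (W.erase e))
    (h2 : Finsupp.mapDomain q U₁ = Finsupp.mapDomain q (W.erase e))
    (h3 : U₁.support ⊂ (W.erase e).support) :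
    ∃ U : α →₀ ℕ, Finsupp.mapDomain p U = Finsupp.mapDomain p W ∧
      Finsupp.mapDomain q U = Finsupp.mapDomain q W ∧ U.support ⊂ W.support := by
  classical
  have hWe : W e ≠ 0 := Finsupp.mem_support_iff.1 he
  refine ⟨U₁ + Finsupp.single e (W e), ?_, ?_, ?_⟩
  · rw [Finsupp.mapDomain_add, h1, ← Finsupp.mapDomain_add, Finsupp.erase_add_single e W]
  · rw [Finsupp.mapDomain_add, h2, ← Finsupp.mapDomain_add, Finsupp.erase_add_single e W]
  · have hsupp_single : (Finsupp.single e (W e)).support = {e} :=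
      Finsupp.support_single_ne_zero e hWe
    have herase : (W.erase e).support = W.support.erase e := Finsupp.support_erase
    have hU1e : e ∉ U₁.support := by
      intro h
      have := h3.1 h
      rw [herase] at this
      exact (Finset.mem_erase.1 this).1 rfl
    have hdisj : Disjoint U₁.support (Finsupp.single e (W e)).support := by
      rw [hsupp_single]
      simp [Finset.disjoint_singleton_right, hU1e]
    rw [Finsupp.support_add_eq hdisj, hsupp_single]
    obtain ⟨f, hf1, hf2⟩ := Finset.exists_of_ssubset h3
    rw [herase] at hf1
    obtain ⟨hfe, hfW⟩ := Finset.mem_erase.1 hf1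
    rw [Finset.ssubset_def]
    constructor
    · intro t ht
      rcases Finset.mem_union.1 ht with h | h
      · have := h3.1 h
        rw [herase] at this
        exact (Finset.mem_erase.1 this).2
      · rw [Finset.mem_singleton.1 h]
        exact he
    · intro hsub
      rcases Finset.mem_union.1 (hsub hfW) with h | h
      · exact hf2 h
      · exact hfe (Finset.mem_singleton.1 h)

lemma cardBound (W : α →₀ ℕ) (p : α → β) (q : α → γ) (e : α) (he : e ∈ W.support)
    (huniq : ∀ f ∈ W.support, p f = p e → f = e)
    (hcard : (Finsupp.mapDomain p W).support.card + (Finsupp.mapDomain q W).support.card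
      < W.support.card) :
    (Finsupp.mapDomain p (W.erase e)).support.card
      + (Finsupp.mapDomain q (W.erase e)).support.card < (W.erase e).support.card := by
  classical
  have hWe : W e ≠ 0 := Finsupp.mem_support_iff.1 he
  have hkey : W.erase e + Finsupp.single e (W e) = W := Finsupp.erase_add_single e W
  have hRp : Finsupp.mapDomain p W
      = Finsupp.mapDomain p (W.erase e) + Finsupp.single (p e) (W e) := by
    rw [← Finsupp.mapDomain_single (f := p), ← Finsupp.mapDomain_add, hkey]
  have hRq : Finsupp.mapDomain q W
      = Finsupp.mapDomain q (W.erase e) + Finsupp.single (q e) (W e) := by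
    rw [← Finsupp.mapDomain_single (f := q), ← Finsupp.mapDomain_add, hkey]
  have hsub_p : (Finsupp.mapDomain p (W.erase e)).support ⊆ (Finsupp.mapDomain p W).support := by
    intro t ht
    rw [Finsupp.mem_support_iff] at ht ⊢
    rw [hRp, Finsupp.add_apply]
    omega
  have hsub_q : (Finsupp.mapDomain q (W.erase e)).support ⊆ (Finsupp.mapDomain q W).support := by
    intro t ht
    rw [Finsupp.mem_support_iff] at ht ⊢
    rw [hRq, Finsupp.add_apply]
    omega
  have hxnot : p e ∉ (Finsupp.mapDomain p (W.erase e)).support := by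
    intro hx
    have hx' := Finsupp.mapDomain_support hx
    obtain ⟨f, hf, hpf⟩ := Finset.mem_image.1 hx'
    rw [Finsupp.support_erase] at hf
    obtain ⟨hfe, hfW⟩ := Finset.mem_erase.1 hf
    exact hfe (huniq f hfW hpf)
  have hxin : p e ∈ (Finsupp.mapDomain p W).support := by
    rw [Finsupp.mem_support_iff, hRp, Finsupp.add_apply, Finsupp.single_apply, if_pos rfl]
    have h0 : (Finsupp.mapDomain p (W.erase e)) (p e) = 0 := Finsupp.notMem_support_iff.1 hxnot
    omega
  have hcard_p : (Finsupp.mapDomain p (W.erase e)).support.card + 1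
      ≤ (Finsupp.mapDomain p W).support.card := by
    have hss : (Finsupp.mapDomain p (W.erase e)).support
        ⊆ (Finsupp.mapDomain p W).support.erase (p e) := by
      intro t ht
      exact Finset.mem_erase.2 ⟨fun h => hxnot (h ▸ ht), hsub_p ht⟩
    have := Finset.card_le_card hss
    rw [Finset.card_erase_of_mem hxin] at this
    have hpos : 0 < (Finsupp.mapDomain p W).support.card := Finset.card_pos.2 ⟨p e, hxin⟩
    omega
  have hcard_q : (Finsupp.mapDomain q (W.erase e)).support.card
      ≤ (Finsupp.mapDomain q W).support.card := Finset.card_le_card hsub_q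
  have hcardW1 : (W.erase e).support.card = W.support.card - 1 := by
    rw [Finsupp.support_erase, Finset.card_erase_of_mem he]
  have hpos : 0 < W.support.card := Finset.card_pos.2 ⟨e, he⟩
  omega

lemma lemC : ∀ (N : ℕ) {β' γ' : Type} (W : α →₀ ℕ) (p : α → β') (q : α → γ'),
    W.support.card ≤ N →
    (Finsupp.mapDomain p W).support.card + (Finsupp.mapDomain q W).support.card
      < W.support.card →
    ∃ U : α →₀ ℕ, Finsupp.mapDomain p U = Finsupp.mapDomain p W ∧
      Finsupp.mapDomain q U = Finsupp.mapDomain q W ∧ U.support ⊂ W.support := by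
  intro N
  induction N with
  | zero =>
    intro β2 γ2 W p q hle hlt
    omega
  | succ N ih =>
    intro β2 γ2 W p q hle hlt
    classical
    by_cases hA : ∃ e ∈ W.support, ∀ f ∈ W.support, p f = p e → f = e
    · obtain ⟨e, he, hu⟩ := hA
      have hcb := cardBound W p q e he hu hlt
      have hle1 : (W.erase e).support.card ≤ N := by
        rw [Finsupp.support_erase, Finset.card_erase_of_mem he]
        have : 0 < W.support.card := Finset.card_pos.2 ⟨e, he⟩
        omega
      obtain ⟨U₁, h1, h2, h3⟩ := ih (W.erase e) p q hle1 hcb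
      exact combineStep W p q e he U₁ h1 h2 h3
    · by_cases hB : ∃ e ∈ W.support, ∀ f ∈ W.support, q f = q e → f = e
      · obtain ⟨e, he, hu⟩ := hB
        have hcb := cardBound W q p e he hu (by omega)
        have hle1 : (W.erase e).support.card ≤ N := by
          rw [Finsupp.support_erase, Finset.card_erase_of_mem he]
          have : 0 < W.support.card := Finset.card_pos.2 ⟨e, he⟩
          omega
        obtain ⟨U₁, h2, h1, h3⟩ := ih (W.erase e) q p hle1 hcb
        exact combineStep W p q e he U₁ h1 h2 h3
      · push_neg at hA hB
        have hne : W.support.Nonempty := Finset.card_pos.1 (by omega)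
        apply existsCycleReduce W hne p q
        · intro e he
          obtain ⟨f, hf, hpf, hfe⟩ := hA e he
          exact ⟨f, hf, hfe, hpf⟩
        · intro e he
          obtain ⟨f, hf, hqf, hfe⟩ := hB e he
          exact ⟨f, hf, hfe, hqf⟩

end AuxGeneric



/-- if `W` is a *minimal* witness to the consistency of the bags `R` and `S`
(no witness has support properly contained in that of `W`), then the support size of `W` is
at most the sum of the support sizes of `R` and `S`. -/
theorem stmt16 {D : A → Type} {X Y : Finset A} (R : Bag D X) (S : Bag D Y)
    (W : Bag D (X ∪ Y))
    (hWX : Bag.marginal Finset.subset_union_left W = R)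
    (hWY : Bag.marginal Finset.subset_union_right W = S)
    (hmin : ∀ U : Bag D (X ∪ Y),
      Bag.marginal Finset.subset_union_left U = R →
      Bag.marginal Finset.subset_union_right U = S →
      ¬ U.support ⊂ W.support) :
    W.support.card ≤ R.support.card + S.support.card := by
  classical
  by_contra hcon
  push_neg at hcon
  have hR : Finsupp.mapDomain (Tup.restrict (Finset.subset_union_left : X ⊆ X ∪ Y)) W = R := hWX
  have hS : Finsupp.mapDomain (Tup.restrict (Finset.subset_union_right : Y ⊆ X ∪ Y)) W = S := hWY
  obtain ⟨U, h1, h2, h3⟩ := lemC W.support.card W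
    (Tup.restrict (Finset.subset_union_left : X ⊆ X ∪ Y))
    (Tup.restrict (Finset.subset_union_right : Y ⊆ X ∪ Y))
    le_rfl (by rw [hR, hS]; exact hcon)
  refine hmin U ?_ ?_ h3
  · show Finsupp.mapDomain (Tup.restrict Finset.subset_union_left) U = R
    rw [h1]
    exact hR
  · show Finsupp.mapDomain (Tup.restrict Finset.subset_union_right) U = S
    rw [h2]
    exact hS
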